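/- Let (μ_k) be a sequence of finite signed Radon measures on R^N converging weakly to a finite signed measure μ, and suppose the total variation measures |μ_k| converge weakly to a finite Radon measure ν. If B is a Borel set with compact closure such that ν(∂B) = 0, then μ_k(B) → μ(B). -/

import Mathlib

open MeasureTheory Filter Set
open scoped NNReal ENNReal

/-- Integral of a function against a signed measure, via its Jordan decomposition. -/
noncomputable def sIntegral {N : ℕ} (μ : SignedMeasure (EuclideanSpace ℝ (Fin N)))
    (f : EuclideanSpace ℝ (Fin N) → ℝ) : ℝ :=
  (∫ y, f y ∂μ.toJordanDecomposition.posPart) - ∫ y, f y ∂μ.toJordanDecomposition.negPart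

section Aux

variable {N : ℕ}

local notation "Rd" => EuclideanSpace ℝ (Fin N)

lemma sm_apply_eq (s : SignedMeasure Rd) {A : Set Rd} (hA : MeasurableSet A) :
    s A = (s.toJordanDecomposition.posPart A).toReal
        - (s.toJordanDecomposition.negPart A).toReal := by
  conv_lhs => rw [← s.toSignedMeasure_toJordanDecomposition]
  rw [MeasureTheory.JordanDecomposition.toSignedMeasure,
    MeasureTheory.Measure.toSignedMeasure_sub_apply hA]
  rfl

lemma totalVariation_eq (s : SignedMeasure Rd) :
    s.totalVariation = s.toJordanDecomposition.posPart + s.toJordanDecomposition.negPart := rfl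

/-- core bound -/
lemma core_bound (p n : Measure Rd) {h : Rd → ℝ}
    (hp : Integrable h p) (hn : Integrable h n) :
    |(∫ x, h x ∂p) - ∫ x, h x ∂n| ≤ ∫ x, |h x| ∂(p + n) := by
  rw [integral_add_measure hp.abs hn.abs]
  calc |(∫ x, h x ∂p) - ∫ x, h x ∂n| ≤ |∫ x, h x ∂p| + |∫ x, h x ∂n| := abs_sub _ _
    _ ≤ (∫ x, |h x| ∂p) + ∫ x, |h x| ∂n := by
        gcongr
        · calc |∫ x, h x ∂p| = ‖∫ x, h x ∂p‖ := (Real.norm_eq_abs _).symm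
            _ ≤ ∫ x, ‖h x‖ ∂p := norm_integral_le_integral_norm _
            _ = ∫ x, |h x| ∂p := by simp [Real.norm_eq_abs]
        · calc |∫ x, h x ∂n| = ‖∫ x, h x ∂n‖ := (Real.norm_eq_abs _).symm
            _ ≤ ∫ x, ‖h x‖ ∂n := norm_integral_le_integral_norm _
            _ = ∫ x, |h x| ∂n := by simp [Real.norm_eq_abs]

lemma abs_sIntegral_le (s : SignedMeasure Rd) {f : Rd → ℝ}
    (hf : Integrable f s.totalVariation) :
    |sIntegral s f| ≤ ∫ y, |f y| ∂s.totalVariation := by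
  rw [totalVariation_eq] at hf ⊢
  exact core_bound _ _ (hf.mono_measure (Measure.le_add_right le_rfl))
    (hf.mono_measure (Measure.le_add_left le_rfl))

lemma indicator_integrable (ρ : Measure Rd) [IsFiniteMeasure ρ] {A : Set Rd}
    (hA : MeasurableSet A) : Integrable (A.indicator (fun _ => (1:ℝ))) ρ := by
  rw [integrable_indicator_iff hA]
  exact integrableOn_const (measure_ne_top ρ A)

lemma integral_indicator_one' (ρ : Measure Rd) {A : Set Rd} (hA : MeasurableSet A) :
    ∫ x, A.indicator (fun _ => (1:ℝ)) x ∂ρ = (ρ A).toReal := by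
  rw [integral_indicator_const (1:ℝ) hA]; simp; rfl

/-- The set-value minus the smoothed integral is controlled by total variation. -/
lemma apply_sub_sIntegral_le (s : SignedMeasure Rd) {A : Set Rd} (hA : MeasurableSet A)
    {g : Rd → ℝ} (hg : Integrable g s.totalVariation) :
    |s A - sIntegral s g| ≤ ∫ x, |A.indicator (fun _ => (1:ℝ)) x - g x| ∂s.totalVariation := by
  have hpos : Integrable g s.toJordanDecomposition.posPart := by
    rw [totalVariation_eq] at hg
    exact hg.mono_measure (Measure.le_add_right le_rfl)
  have hneg : Integrable g s.toJordanDecomposition.negPart := by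
    rw [totalVariation_eq] at hg
    exact hg.mono_measure (Measure.le_add_left le_rfl)
  have h1pos : Integrable (A.indicator (fun _ => (1:ℝ))) s.toJordanDecomposition.posPart :=
    indicator_integrable _ hA
  have h1neg : Integrable (A.indicator (fun _ => (1:ℝ))) s.toJordanDecomposition.negPart :=
    indicator_integrable _ hA
  have key : s A - sIntegral s g
      = (∫ x, (A.indicator (fun _ => (1:ℝ)) x - g x) ∂s.toJordanDecomposition.posPart)
        - ∫ x, (A.indicator (fun _ => (1:ℝ)) x - g x) ∂s.toJordanDecomposition.negPart := by
    rw [integral_sub h1pos hpos, integral_sub h1neg hneg, sm_apply_eq s hA, sIntegral,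
      integral_indicator_one' _ hA, integral_indicator_one' _ hA]
    ring
  rw [key, totalVariation_eq]
  exact core_bound _ _ (h1pos.sub hpos) (h1neg.sub hneg)

end Aux
section Key

open scoped NNReal ENNReal

variable {N : ℕ}

local notation "Rd" => EuclideanSpace ℝ (Fin N)

instance tv_finite (s : SignedMeasure Rd) : IsFiniteMeasure s.totalVariation := by
  rw [totalVariation_eq]; infer_instance

lemma key1 (μk : ℕ → SignedMeasure Rd) (μ : SignedMeasure Rd)
    (ν : Measure Rd) [IsFiniteMeasure ν]
    (hweak : ∀ f : Rd → ℝ, Continuous f → HasCompactSupport f →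
      Tendsto (fun k => sIntegral (μk k) f) atTop (nhds (sIntegral μ f)))
    (hTV : ∀ f : Rd → ℝ, Continuous f → HasCompactSupport f →
      Tendsto (fun k => ∫ y, f y ∂(μk k).totalVariation) atTop (nhds (∫ y, f y ∂ν)))
    {f : Rd → ℝ} (hf : Continuous f) (hsupp : HasCompactSupport f) :
    |sIntegral μ f| ≤ ∫ y, |f y| ∂ν := by
  have habs : Continuous fun y => |f y| := hf.abs
  have hsupp' : HasCompactSupport fun y => |f y| := hsupp.abs
  have h1 : Tendsto (fun k => |sIntegral (μk k) f|) atTop (nhds |sIntegral μ f|) :=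
    (hweak f hf hsupp).abs
  have h2 := hTV _ habs hsupp'
  refine le_of_tendsto_of_tendsto' h1 h2 fun k => ?_
  exact abs_sIntegral_le _ (hf.integrable_of_hasCompactSupport hsupp)

lemma key2 (μk : ℕ → SignedMeasure Rd) (μ : SignedMeasure Rd)
    (ν : Measure Rd) [IsFiniteMeasure ν]
    (hweak : ∀ f : Rd → ℝ, Continuous f → HasCompactSupport f →
      Tendsto (fun k => sIntegral (μk k) f) atTop (nhds (sIntegral μ f)))
    (hTV : ∀ f : Rd → ℝ, Continuous f → HasCompactSupport f →
      Tendsto (fun k => ∫ y, f y ∂(μk k).totalVariation) atTop (nhds (∫ y, f y ∂ν)))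
    {A : Set Rd} (hA : MeasurableSet A) :
    |μ A| ≤ (ν A).toReal := by
  refine le_of_forall_pos_le_add fun ε hε => ?_
  set ρ : Measure Rd := μ.totalVariation + ν with hρ
  have hle1 : μ.totalVariation ≤ ρ := Measure.le_add_right le_rfl
  have hle2 : ν ≤ ρ := Measure.le_add_left le_rfl
  set F : Rd → ℝ := A.indicator (fun _ => (1:ℝ)) with hF
  obtain ⟨g, gsupp, gapprox, gcont, gint⟩ :=
    (indicator_integrable ρ hA).exists_hasCompactSupport_integral_sub_le (half_pos hε)
  have gtv : Integrable g μ.totalVariation := gcont.integrable_of_hasCompactSupport gsupp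
  have hFint : ∀ (m : Measure Rd), m ≤ ρ → Integrable F m := fun m hm =>
    (indicator_integrable ρ hA).mono_measure hm
  have hDint : ∀ (m : Measure Rd), m ≤ ρ → Integrable (fun x => F x - g x) m := fun m hm =>
    ((hFint ρ le_rfl).sub gint).mono_measure hm
  have hind : ∀ (m : Measure Rd), m ≤ ρ →
      (∫ x, |F x - g x| ∂m) ≤ ε / 2 := by
    intro m hm
    have h1 : (∫ x, |F x - g x| ∂m) ≤ ∫ x, |F x - g x| ∂ρ :=
      integral_mono_measure hm (Filter.Eventually.of_forall fun x => abs_nonneg _)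
        (hDint ρ le_rfl).abs
    refine h1.trans (le_trans (le_of_eq ?_) gapprox)
    simp [Real.norm_eq_abs]; rfl
  have hF0 : ∀ x, 0 ≤ F x := by
    intro x; by_cases hx : x ∈ A <;> simp [hF, hx]
  calc |μ A| ≤ |μ A - sIntegral μ g| + |sIntegral μ g| := by
        have h := abs_sub (μ A - sIntegral μ g) (-sIntegral μ g)
        simpa using h
    _ ≤ (∫ x, |F x - g x| ∂μ.totalVariation) + ∫ y, |g y| ∂ν := by
        gcongr
        · exact apply_sub_sIntegral_le μ hA gtv
        · exact key1 μk μ ν hweak hTV gcont gsupp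
    _ ≤ ε / 2 + ∫ y, |g y| ∂ν := by gcongr; exact hind _ hle1
    _ ≤ ε / 2 + ((∫ y, F y ∂ν) + ∫ y, |F y - g y| ∂ν) := by
        gcongr
        rw [← integral_add (hFint ν hle2) (hDint ν hle2).abs]
        refine integral_mono ((gint.mono_measure hle2).abs)
          ((hFint ν hle2).add (hDint ν hle2).abs) fun x => ?_
        calc |g x| = |F x - (F x - g x)| := by ring_nf
          _ ≤ |F x| + |F x - g x| := abs_sub _ _
          _ = F x + |F x - g x| := by rw [abs_of_nonneg (hF0 x)]
    _ ≤ ε / 2 + ((ν A).toReal + ε / 2) := by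
        gcongr
        · exact le_of_eq (integral_indicator_one' ν hA)
        · exact hind _ hle2
    _ = (ν A).toReal + ε := by ring

lemma nn_le_of_toReal (x : ℝ≥0) (b : ℝ≥0∞) (h : (x:ℝ) ≤ b.toReal) : (x:ℝ≥0∞) ≤ b := by
  rw [← ENNReal.ofReal_coe_nnreal]; exact ENNReal.ofReal_le_of_le_toReal h

lemma key3 (μk : ℕ → SignedMeasure Rd) (μ : SignedMeasure Rd)
    (ν : Measure Rd) [IsFiniteMeasure ν]
    (hweak : ∀ f : Rd → ℝ, Continuous f → HasCompactSupport f →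
      Tendsto (fun k => sIntegral (μk k) f) atTop (nhds (sIntegral μ f)))
    (hTV : ∀ f : Rd → ℝ, Continuous f → HasCompactSupport f →
      Tendsto (fun k => ∫ y, f y ∂(μk k).totalVariation) atTop (nhds (∫ y, f y ∂ν))) :
    μ.totalVariation ≤ ν := by
  refine Measure.le_iff.2 fun A hA => ?_
  obtain ⟨i, hi₁, hi₂, hi₃, hpos, hneg⟩ := μ.toJordanDecomposition_spec
  rw [MeasureTheory.SignedMeasure.totalVariation, Measure.add_apply, hpos, hneg,
    MeasureTheory.SignedMeasure.toMeasureOfZeroLE_apply _ hi₂ hi₁ hA,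
    MeasureTheory.SignedMeasure.toMeasureOfLEZero_apply _ hi₃ hi₁.compl hA]
  have e1 : (ν (i ∩ A) + ν (iᶜ ∩ A)) = ν A := by
    rw [Set.inter_comm, Set.inter_comm iᶜ A, ← Set.diff_eq, measure_inter_add_diff A hi₁]
  rw [← e1]
  refine add_le_add (nn_le_of_toReal _ _ ?_) (nn_le_of_toReal _ _ ?_)
  · simp only [NNReal.coe_mk]
    exact le_trans (le_abs_self _) (key2 μk μ ν hweak hTV (hi₁.inter hA))
  · simp only [NNReal.coe_mk]
    exact le_trans (neg_le_abs _) (key2 μk μ ν hweak hTV (hi₁.compl.inter hA))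

end Key
/-- Weak convergence of signed measures plus weak convergence of total variations
implies convergence on Borel sets whose boundary is null for the limit variation. -/
theorem stmt2 {N : ℕ} (μk : ℕ → SignedMeasure (EuclideanSpace ℝ (Fin N)))
    (μ : SignedMeasure (EuclideanSpace ℝ (Fin N)))
    (ν : Measure (EuclideanSpace ℝ (Fin N))) [IsFiniteMeasure ν]
    (hweak : ∀ f : EuclideanSpace ℝ (Fin N) → ℝ, Continuous f → HasCompactSupport f →
      Tendsto (fun k => sIntegral (μk k) f) atTop (nhds (sIntegral μ f)))
    (hTV : ∀ f : EuclideanSpace ℝ (Fin N) → ℝ, Continuous f → HasCompactSupport f →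
      Tendsto (fun k => ∫ y, f y ∂(μk k).totalVariation) atTop (nhds (∫ y, f y ∂ν)))
    (B : Set (EuclideanSpace ℝ (Fin N))) (hB : MeasurableSet B)
    (hBc : IsCompact (closure B)) (hν : ν (frontier B) = 0) :
    Tendsto (fun k => μk k B) atTop (nhds (μ B)) := by
  rw [Metric.tendsto_nhds]
  intro ε hε
  have hε8 : 0 < ε / 8 := by linarith
  set e8 : ℝ≥0∞ := ENNReal.ofReal (ε / 8) with he8
  have he8ne : e8 ≠ 0 := by
    simp only [he8, ne_eq, ENNReal.ofReal_eq_zero, not_le]; linarith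
  -- outer open set
  obtain ⟨U₀, hBU₀, hU₀open, hU₀⟩ :=
    (closure B).exists_isOpen_lt_add (μ := ν) (measure_ne_top ν _) he8ne
  -- compact L between closure B and U₀
  obtain ⟨L, hLcomp, hBL, hLU₀⟩ := exists_compact_between hBc hU₀open hBU₀
  -- compact K inside interior B
  obtain ⟨K, hKsub, hKcomp, hKlt⟩ :=
    (measurableSet_interior (s := B)).exists_isCompact_lt_add (μ := ν)
      (measure_ne_top ν _) he8ne
  -- compact M between K and interior B
  obtain ⟨M, hMcomp, hKM, hMB⟩ := exists_compact_between hKcomp isOpen_interior hKsub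
  -- the inner test function g
  have hBiL : B ⊆ interior L := fun x hx => hBL (subset_closure hx)
  have hMiL : M ⊆ interior L := fun x hx => hBiL (interior_subset (hMB hx))
  obtain ⟨g, hg1, hg0, hgsupp, hgIcc⟩ :=
    exists_continuous_one_zero_of_isCompact hMcomp isOpen_interior.isClosed_compl
      (Set.disjoint_compl_right_iff_subset.2 hMiL)
  -- the exceptional compact set C and its neighborhood V
  set C : Set (EuclideanSpace ℝ (Fin N)) := L \ interior M with hC
  have hCcomp : IsCompact C := hLcomp.diff isOpen_interior
  have hCsub : C ⊆ (L \ closure B) ∪ (frontier B ∪ (interior B \ K)) := by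
    rintro x ⟨hxL, hxM⟩
    by_cases hxcl : x ∈ closure B
    · right
      rcases (closure_eq_interior_union_frontier B ▸ hxcl) with hxi | hxf
      · right; exact ⟨hxi, fun hxK => hxM (hKM hxK)⟩
      · left; exact hxf
    · left; exact ⟨hxL, hxcl⟩
  have hνC : ν C < e8 + e8 := by
    have h1 : ν (L \ closure B) < e8 :=
      lt_of_le_of_lt (measure_mono (Set.diff_subset_diff_left hLU₀))
        (measure_diff_lt_of_lt_add isClosed_closure.measurableSet.nullMeasurableSet
          hBU₀ (measure_ne_top ν _) hU₀)
    have h2 : ν (interior B \ K) < e8 :=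
      measure_diff_lt_of_lt_add hKcomp.isClosed.measurableSet.nullMeasurableSet
        hKsub (measure_ne_top ν _) hKlt
    calc ν C ≤ ν (L \ closure B) + (ν (frontier B) + ν (interior B \ K)) :=
          le_trans (measure_mono hCsub)
            (le_trans (measure_union_le _ _) (by gcongr; exact measure_union_le _ _))
      _ = ν (L \ closure B) + ν (interior B \ K) := by rw [hν, zero_add]
      _ < e8 + e8 := ENNReal.add_lt_add h1 h2
  obtain ⟨V, hCV, hVopen, hVν⟩ :=
    C.exists_isOpen_lt_add (μ := ν) (measure_ne_top ν _) he8ne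
  have hνV : ν V < ENNReal.ofReal (3 * (ε / 8)) := by
    have : e8 + e8 + e8 = ENNReal.ofReal (3 * (ε / 8)) := by
      rw [he8, ← ENNReal.ofReal_add hε8.le hε8.le, ← ENNReal.ofReal_add (by linarith) hε8.le]
      ring_nf
    rw [← this]
    calc ν V < ν C + e8 := hVν
      _ < e8 + e8 + e8 := ENNReal.add_lt_add_right ENNReal.ofReal_ne_top hνC
  -- the outer test function h
  obtain ⟨h, hh1, hh0, hhsupp, hhIcc⟩ :=
    exists_continuous_one_zero_of_isCompact hCcomp hVopen.isClosed_compl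
      (Set.disjoint_compl_right_iff_subset.2 hCV)
  -- pointwise domination
  set F : EuclideanSpace ℝ (Fin N) → ℝ := B.indicator (fun _ => (1:ℝ)) with hF
  have hdom : ∀ x, |F x - g x| ≤ h x := by
    intro x
    by_cases hxM : x ∈ interior M
    · have hgx : g x = 1 := hg1 (interior_subset hxM)
      have hxB : x ∈ B := interior_subset (hMB (interior_subset hxM))
      have hFx : F x = 1 := by simp [hF, hxB]
      rw [hFx, hgx]; simpa using (hhIcc x).1
    · by_cases hxL : x ∈ L
      · have hhx : h x = 1 := hh1 ⟨hxL, hxM⟩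
        rw [hhx]
        have hg01 := hgIcc x
        have hF01 : F x = 0 ∨ F x = 1 := by
          by_cases hxB : x ∈ B
          · right; simp [hF, hxB]
          · left; simp [hF, hxB]
        rcases hF01 with hFx | hFx <;> rw [hFx] <;>
          (rw [abs_le]; constructor <;> [linarith [hg01.2]; linarith [hg01.1]])
      · have hxB : x ∉ B := fun hxB => hxL (interior_subset (hBiL hxB))
        have hFx : F x = 0 := by simp [hF, hxB]
        have hgx : g x = 0 := hg0 (fun hxi : x ∈ interior L => hxL (interior_subset hxi))
        rw [hFx, hgx]; simpa using (hhIcc x).1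
  -- integrabilities
  have hgc : Continuous g := g.continuous
  have hhc : Continuous h := h.continuous
  have hFint : ∀ (m : Measure (EuclideanSpace ℝ (Fin N))) [IsFiniteMeasure m],
      Integrable F m := fun m _ => indicator_integrable m hB
  have hhν : (∫ x, h x ∂ν) < 3 * (ε / 8) := by
    have hle : (∫ x, h x ∂ν) ≤ ∫ x, V.indicator (fun _ => (1:ℝ)) x ∂ν := by
      refine integral_mono (hhc.integrable_of_hasCompactSupport hhsupp)
        (indicator_integrable ν hVopen.measurableSet) fun x => ?_
      by_cases hxV : x ∈ V
      · simp only [Set.indicator_of_mem hxV]; exact (hhIcc x).2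
      · have : h x = 0 := hh0 hxV
        simp [Set.indicator_of_notMem hxV, this]
    rw [integral_indicator_one' ν hVopen.measurableSet] at hle
    exact lt_of_le_of_lt hle (ENNReal.toReal_lt_of_lt_ofReal hνV)
  -- estimate for a general signed measure whose total variation integral of h is controlled
  have hest : ∀ (s : SignedMeasure (EuclideanSpace ℝ (Fin N))),
      |s B - sIntegral s g| ≤ ∫ x, h x ∂s.totalVariation := by
    intro s
    refine le_trans (apply_sub_sIntegral_le s hB
      (hgc.integrable_of_hasCompactSupport hgsupp)) ?_
    refine integral_mono (((hFint s.totalVariation).sub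
      (hgc.integrable_of_hasCompactSupport hgsupp)).abs)
      (hhc.integrable_of_hasCompactSupport hhsupp) fun x => hdom x
  -- limit-measure estimate
  have hμest : |μ B - sIntegral μ g| < 3 * (ε / 8) := by
    refine lt_of_le_of_lt (le_trans (hest μ) ?_) hhν
    exact integral_mono_measure (key3 μk μ ν hweak hTV)
      (Filter.Eventually.of_forall fun x => (hhIcc x).1)
      (hhc.integrable_of_hasCompactSupport hhsupp)
  -- eventual estimates along the sequence
  have hev1 : ∀ᶠ k in atTop, (∫ x, h x ∂(μk k).totalVariation) < 3 * (ε / 8) :=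
    (hTV h hhc hhsupp).eventually_lt_const hhν
  have hev2 : ∀ᶠ k in atTop, |sIntegral (μk k) g - sIntegral μ g| < ε / 8 := by
    have := Metric.tendsto_nhds.1 (hweak g hgc hgsupp) (ε / 8) hε8
    simpa [Real.dist_eq] using this
  filter_upwards [hev1, hev2] with k hk1 hk2
  have hk3 : |μk k B - sIntegral (μk k) g| < 3 * (ε / 8) := lt_of_le_of_lt (hest (μk k)) hk1
  rw [Real.dist_eq]
  calc |μk k B - μ B|
      ≤ |μk k B - sIntegral (μk k) g| + |sIntegral (μk k) g - μ B| := abs_sub_le _ _ _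
    _ ≤ |μk k B - sIntegral (μk k) g|
        + (|sIntegral (μk k) g - sIntegral μ g| + |sIntegral μ g - μ B|) := by
        gcongr
        exact abs_sub_le _ _ _
    _ < 3 * (ε / 8) + (ε / 8 + 3 * (ε / 8)) := by
        gcongr
        rw [abs_sub_comm]; exact hμest
    _ < ε := by linarith
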